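/- For every n ≥ 2, applying pivots successively to the edges a_2b_2, a_3b_3, …, a_{n−1}b_{n−1} (in this order) of the chain graph Z_n yields a graph isomorphic to the path P_{2n} on 2n vertices. -/

import Mathlib

open SimpleGraph

/-- The chain graph `Z_n`: parts `a_1, …, a_n` (left) and `b_1, …, b_n` (right),
with `a_i` adjacent to `b_j` iff `i ≤ j`. -/
def Zgraph (n : ℕ) : SimpleGraph (Fin n ⊕ Fin n) :=
  SimpleGraph.fromRel (fun x y => ∃ i j : Fin n, x = Sum.inl i ∧ y = Sum.inr j ∧ i ≤ j)

/-- The graph obtained from `G` by pivoting the (u,v)-pair: the adjacency of every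
pair `(x, y)` with `x ∈ N(u)∖{v}` and `y ∈ N(v)∖{u}` (in either order) is
complemented, all other adjacencies are unchanged. -/
def pivot {V : Type*} (G : SimpleGraph V) (u v : V) : SimpleGraph V where
  Adj x y := x ≠ y ∧ ¬ (G.Adj x y ↔
    ((G.Adj u x ∧ x ≠ v ∧ G.Adj v y ∧ y ≠ u) ∨ (G.Adj u y ∧ y ≠ v ∧ G.Adj v x ∧ x ≠ u)))
  symm := by
    constructor
    intro x y hxy
    obtain ⟨h1, h2⟩ := hxy
    refine ⟨h1.symm, ?_⟩
    rw [G.adj_comm y x]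
    tauto
  loopless := by
    constructor
    intro x hx
    exact hx.1 rfl

/-- The intermediate graph after `k` pivots: `a_i ~ b_j` iff
`(i < k ∧ (j = i ∨ j = i+1)) ∨ (k ≤ i ∧ i ≤ j)`. -/
def Ggraph (n k : ℕ) : SimpleGraph (Fin n ⊕ Fin n) :=
  SimpleGraph.fromRel (fun x y => ∃ i j : Fin n, x = Sum.inl i ∧ y = Sum.inr j ∧
    ((i.val < k ∧ (j.val = i.val ∨ j.val = i.val + 1)) ∨ (k ≤ i.val ∧ i.val ≤ j.val)))

lemma Ggraph_adj_lr (n k : ℕ) (i j : Fin n) :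
    (Ggraph n k).Adj (Sum.inl i) (Sum.inr j) ↔
      ((i.val < k ∧ (j.val = i.val ∨ j.val = i.val + 1)) ∨ (k ≤ i.val ∧ i.val ≤ j.val)) := by
  simp [Ggraph]

lemma Ggraph_adj_rl (n k : ℕ) (i j : Fin n) :
    (Ggraph n k).Adj (Sum.inr j) (Sum.inl i) ↔
      ((i.val < k ∧ (j.val = i.val ∨ j.val = i.val + 1)) ∨ (k ≤ i.val ∧ i.val ≤ j.val)) := by
  rw [adj_comm]; exact Ggraph_adj_lr n k i j

lemma Ggraph_adj_ll (n k : ℕ) (i j : Fin n) :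
    ¬ (Ggraph n k).Adj (Sum.inl i) (Sum.inl j) := by simp [Ggraph]

lemma Ggraph_adj_rr (n k : ℕ) (i j : Fin n) :
    ¬ (Ggraph n k).Adj (Sum.inr i) (Sum.inr j) := by simp [Ggraph]

lemma Ggraph_zero (n : ℕ) : Ggraph n 0 = Zgraph n := by
  ext x y
  simp only [Ggraph, Zgraph, SimpleGraph.fromRel_adj, Fin.le_def]
  simp

lemma Ggraph_step (n m : ℕ) (hm : m < n - 2) :
    pivot (Ggraph n m) (Sum.inl (⟨(m + 1) % n, Nat.mod_lt _ (by omega)⟩ : Fin n))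
      (Sum.inr (⟨(m + 1) % n, Nat.mod_lt _ (by omega)⟩ : Fin n)) = Ggraph n (m + 1) := by
  have hmn : (m + 1) % n = m + 1 := Nat.mod_eq_of_lt (by omega)
  ext x y
  rcases x with i | i <;> rcases y with j | j <;>
    simp only [pivot, SimpleGraph.Adj, Ggraph_adj_lr, Ggraph_adj_rl,
      Ggraph_adj_ll, Ggraph_adj_rr, iff_false, false_iff, false_and, and_false,
      or_false, false_or, ne_eq, Sum.inl.injEq, Sum.inr.injEq, reduceCtorEq,
      not_false_eq_true, true_and, and_true, Fin.ext_iff, Fin.val_mk, hmn] <;>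
    (first | omega | tauto)

lemma Ggraph_fold (n : ℕ) (hn : 2 ≤ n) :
    (List.range (n - 2)).foldl
        (fun H i =>
          pivot H (Sum.inl (⟨(i + 1) % n, Nat.mod_lt _ (Nat.lt_of_lt_of_le (by norm_num) hn)⟩ : Fin n))
                  (Sum.inr (⟨(i + 1) % n, Nat.mod_lt _ (Nat.lt_of_lt_of_le (by norm_num) hn)⟩ : Fin n)))
        (Zgraph n) = Ggraph n (n - 2) := by
  suffices h : ∀ m, m ≤ n - 2 → (List.range m).foldl
      (fun H i =>
        pivot H (Sum.inl (⟨(i + 1) % n, Nat.mod_lt _ (by omega)⟩ : Fin n))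
                (Sum.inr (⟨(i + 1) % n, Nat.mod_lt _ (by omega)⟩ : Fin n)))
      (Zgraph n) = Ggraph n m from h _ le_rfl
  intro m hm
  induction m with
  | zero => simpa using (Ggraph_zero n).symm
  | succ k ih =>
    rw [List.range_succ, List.foldl_append, ih (by omega)]
    simpa using Ggraph_step n k (by omega)

/-- Pivoting `Z_n` successively at the edges `a_2 b_2, a_3 b_3, …, a_{n-1} b_{n-1}`
yields the path `P_{2n}`. -/
theorem Zgraph_pivots_to_path (n : ℕ) (hn : 2 ≤ n) :
    Nonempty
      ((List.range (n - 2)).foldl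
        (fun H i =>
          pivot H (Sum.inl (⟨(i + 1) % n, Nat.mod_lt _ (by omega)⟩ : Fin n))
                  (Sum.inr (⟨(i + 1) % n, Nat.mod_lt _ (by omega)⟩ : Fin n)))
        (Zgraph n)
      ≃g SimpleGraph.pathGraph (2 * n)) := by
  rw [Ggraph_fold n hn]
  refine ⟨⟨⟨fun x => match x with
      | Sum.inl i => ⟨2 * i.val + 1, by omega⟩
      | Sum.inr j => ⟨2 * j.val, by omega⟩,
    fun k => if k.val % 2 = 0 then Sum.inr ⟨k.val / 2, by omega⟩
      else Sum.inl ⟨k.val / 2, by omega⟩, ?_, ?_⟩, ?_⟩⟩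
  · intro x
    rcases x with i | j
    · have h : ¬ (2 * i.val + 1) % 2 = 0 := by omega
      simp only [if_neg h, Sum.inl.injEq]
      exact Fin.ext (by simp only [Fin.val_mk]; omega)
    · have h : (2 * j.val) % 2 = 0 := by omega
      simp only [if_pos h, Sum.inr.injEq]
      exact Fin.ext (by simp only [Fin.val_mk]; omega)
  · intro k
    by_cases h : k.val % 2 = 0
    · simp only [if_pos h]
      exact Fin.ext (by simp; omega)
    · simp only [if_neg h]
      exact Fin.ext (by simp; omega)
  · intro x y
    have h2 : ∀ a b : Fin (2 * n), (SimpleGraph.pathGraph (2 * n)).Adj a b ↔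
        (a.val + 1 = b.val ∨ b.val + 1 = a.val) := fun a b => SimpleGraph.pathGraph_adj
    rcases x with i | i <;> rcases y with j | j <;>
      simp only [Equiv.coe_fn_mk, h2, Fin.val_mk, Ggraph_adj_lr, Ggraph_adj_rl,
        Ggraph_adj_ll, Ggraph_adj_rr, iff_false, false_iff] <;>
      [skip; skip; skip; skip]
    · omega
    · have := i.isLt; have := j.isLt
      constructor
      · intro h; omega
      · intro h; omega
    · have := i.isLt; have := j.isLt
      constructor
      · intro h; omega
      · intro h; omega
    · omega
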